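/- Let β = (βx, βy) ∈ (0,∞)² and β_min = min(βx, βy). Assume the set of saddle points Z⋆ is nonempty, that dom f* is nonempty and closed, and that the smoothed gap has a quadratic error bound with constant η > 0: G_β(z') ≥ (η/2) dist(z', Z⋆)² for all z' ∈ X × Y. Then for every z = (x,y) ∈ X × Y with f(x) < +∞, the optimality gap satisfies f(x) − f⋆ ≤ ( 1 + ‖x‖ + √(2/η) · √( (1 + ‖x‖ + ‖y‖) √(D(z)) + D(z)/(2 β_min) ) ) · √(D(z)). -/

import Mathlib

open scoped RealInnerProductSpace
open Filter Topology Metric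

noncomputable section

variable {X Y : Type*} [NormedAddCommGroup X] [InnerProductSpace ℝ X]
  [NormedAddCommGroup Y] [InnerProductSpace ℝ Y]

/-- The Lagrangian `L(x, y) = f(x) + ⟪A x − b, y⟫`. -/
def Lag (f : X → EReal) (A : X →L[ℝ] Y) (b : Y) (x : X) (y : Y) : EReal :=
  f x + ((⟪A x - b, y⟫ : ℝ) : EReal)

/-- The smoothed duality gap `G_β((x, y); (xd, yd))`, valued in `ℝ ∪ {+∞}` (here `EReal`;
the inner expression is `−∞` exactly when `f x' = +∞`, so such `x'` do not contribute). -/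
def smoothedGap (f : X → EReal) (A : X →L[ℝ] Y) (b : Y) (βx βy : ℝ)
    (x : X) (y : Y) (xd : X) (yd : Y) : EReal :=
  ⨆ w : X × Y,
    (Lag f A b x w.2 - Lag f A b w.1 y
      - ((βx / 2 * ‖w.1 - xd‖ ^ 2 + βy / 2 * ‖w.2 - yd‖ ^ 2 : ℝ) : EReal))

/-- `f` is proper: never `−∞` and not identically `+∞`. -/
def EProper (f : X → EReal) : Prop := (∀ u, f u ≠ ⊥) ∧ ∃ u, f u ≠ ⊤

/-- Convexity for an `EReal`-valued function. -/
def EConvexOn (f : X → EReal) : Prop :=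
  ∀ u v : X, ∀ t : ℝ, 0 ≤ t → t ≤ 1 →
    f (t • u + (1 - t) • v) ≤ (t : EReal) * f u + ((1 - t : ℝ) : EReal) * f v

/-- The subdifferential `∂f(x) = {q | ∀ u, f(u) ≥ f(x) + ⟪q, u − x⟫}`. -/
def ESubdiff (f : X → EReal) (x : X) : Set X :=
  {q | ∀ u : X, f x + ((⟪q, u - x⟫ : ℝ) : EReal) ≤ f u}

/-- `p = Prox_{s f}(v)`: `p` is the (unique) minimizer of `f(·) + (1/(2s))‖· − v‖²`. -/
def IsProx (f : X → EReal) (s : ℝ) (v p : X) : Prop :=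
  ∀ u : X, f p + ((1 / (2 * s) * ‖p - v‖ ^ 2 : ℝ) : EReal)
    ≤ f u + ((1 / (2 * s) * ‖u - v‖ ^ 2 : ℝ) : EReal)

/-- The Fenchel–Legendre conjugate `f*(φ) = sup_u (⟪φ, u⟫ − f(u))`. -/
def fenchel (f : X → EReal) (φ : X) : EReal := ⨆ u : X, (((⟪φ, u⟫ : ℝ) : EReal) - f u)

/-- The domain of the Fenchel conjugate. -/
def fdom (f : X → EReal) : Set X := {φ | fenchel f φ ≠ ⊤}

/-- `a = Proj_S(v)`: `a` is the (unique, for `S` closed convex nonempty) Euclidean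
projection of `v` onto `S`. -/
def IsProj (S : Set X) (v a : X) : Prop := a ∈ S ∧ ∀ u ∈ S, ‖a - v‖ ≤ ‖u - v‖

/-- `(xs, ys)` is a saddle point of the Lagrangian. -/
def IsSaddle (f : X → EReal) (A : X →L[ℝ] Y) (b : Y) (xs : X) (ys : Y) : Prop :=
  ∀ (x' : X) (y' : Y), Lag f A b xs y' ≤ Lag f A b xs ys ∧ Lag f A b xs ys ≤ Lag f A b x' ys

/-- The set of saddle points `Z⋆`. -/
def saddleSet (f : X → EReal) (A : X →L[ℝ] Y) (b : Y) : Set (X × Y) :=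
  {zs | IsSaddle f A b zs.1 zs.2}

/-- Euclidean distance from a point of `X × Y` to a set. -/
def distZ (z : X × Y) (S : Set (X × Y)) : ℝ :=
  ⨅ w : S, Real.sqrt (‖z.1 - (w : X × Y).1‖ ^ 2 + ‖z.2 - (w : X × Y).2‖ ^ 2)

/-- The projected duality gap `D(z)`, where `fx = f(x)` and `fa = f*(a)` (both finite). -/
def PDG (fx fa : ℝ) (A : X →L[ℝ] Y) (At : Y →L[ℝ] X) (b : Y) (a x : X) (y : Y) : ℝ :=
  |fx + fa + ⟪b, y⟫| ^ 2 + ‖a + At y‖ ^ 2 + ‖A x - b‖ ^ 2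

private lemma amgm_aux {β c t : ℝ} (hβ : 0 < β) : c * t - β / 2 * t ^ 2 ≤ c ^ 2 / (2 * β) := by
  rw [le_div_iff₀ (by linarith)]
  nlinarith [sq_nonneg (β * t - c)]

/-- A saddle point is feasible and has finite objective value. -/
private lemma saddle_basic {f : X → EReal} {A : X →L[ℝ] Y} {b : Y} (hf_proper : EProper f)
    {xs : X} {ys : Y} (hs : IsSaddle f A b xs ys) :
    A xs = b ∧ ∃ r : ℝ, f xs = (r : EReal) := by
  obtain ⟨hbot, u0, hu0⟩ := hf_proper
  have hfin : ∃ r : ℝ, f xs = (r : EReal) := by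
    rcases em (f xs = ⊤) with h | h
    · exfalso
      obtain ⟨r0, hr0⟩ : ∃ r : ℝ, f u0 = (r : EReal) :=
        ⟨(f u0).toReal, (EReal.coe_toReal hu0 (hbot u0)).symm⟩
      have h2 := (hs u0 ys).2
      simp only [Lag, h, hr0, EReal.top_add_coe] at h2
      have h3 : ((r0 + ⟪A u0 - b, ys⟫ : ℝ) : EReal) = ⊤ := by
        rw [top_le_iff] at h2; rw [← h2]; push_cast; ring
      exact EReal.coe_ne_top _ h3
    · exact ⟨(f xs).toReal, (EReal.coe_toReal h (hbot xs)).symm⟩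
  obtain ⟨r, hr⟩ := hfin
  refine ⟨?_, r, hr⟩
  have key : ∀ y' : Y, ⟪A xs - b, y'⟫ ≤ ⟪A xs - b, ys⟫ := by
    intro y'
    have h1 := (hs xs y').1
    simp only [Lag, hr] at h1
    have h1' : r + ⟪A xs - b, y'⟫ ≤ r + ⟪A xs - b, ys⟫ := by exact_mod_cast h1
    linarith
  have h2 := key (ys + (A xs - b))
  rw [inner_add_right] at h2
  have hn : ‖A xs - b‖ ^ 2 ≤ 0 := by
    rw [← real_inner_self_eq_norm_sq]; linarith
  have h0 : ‖A xs - b‖ = 0 := by nlinarith [norm_nonneg (A xs - b)]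
  exact sub_eq_zero.mp (norm_eq_zero.mp h0)

/-- All saddle points have the same objective value. -/
private lemma saddle_val_eq {f : X → EReal} {A : X →L[ℝ] Y} {b : Y} (hf_proper : EProper f)
    {x1 x2 : X} {y1 y2 : Y} (h1 : IsSaddle f A b x1 y1) (h2 : IsSaddle f A b x2 y2) :
    f x1 = f x2 := by
  obtain ⟨hb1, r1, hr1⟩ := saddle_basic hf_proper h1
  obtain ⟨hb2, r2, hr2⟩ := saddle_basic hf_proper h2
  have e1 : A x1 - b = 0 := by rw [hb1, sub_self]
  have e2 : A x2 - b = 0 := by rw [hb2, sub_self]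
  have l1 := (h1 x2 y1).2
  have l2 := (h2 x1 y2).2
  simp only [Lag, e1, e2, inner_zero_left, EReal.coe_zero, add_zero] at l1 l2
  exact le_antisymm l1 l2

set_option maxHeartbeats 2000000 in
/-- optimality-gap bound from the projected duality gap.
Assume the saddle-point set is nonempty (witnessed by `(xs, ys)`), `dom f*` is nonempty and
closed, and the smoothed gap has a quadratic error bound with constant `η > 0`.  Then for
every `z = (x, y)` with `f(x) < +∞` (its finite value `fx` given by `hfx`), with
`a = Proj_{dom f*}(−Aᵀy)` (whose conjugate value `fa = f*(a)` is given by `hfa`) and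
`D(z)` the projected duality gap,
`f(x) − f⋆ ≤ (1 + ‖x‖ + √(2/η) √((1 + ‖x‖ + ‖y‖) √(D(z)) + D(z)/(2 β_min))) √(D(z))`. -/
theorem optimality_gap_le_PDG
    [FiniteDimensional ℝ X] [FiniteDimensional ℝ Y]
    (f : X → EReal) (A : X →L[ℝ] Y) (At : Y →L[ℝ] X) (b : Y)
    (hf_proper : EProper f) (hf_lsc : LowerSemicontinuous f) (hf_conv : EConvexOn f)
    (hAt : ∀ (u : X) (v : Y), ⟪A u, v⟫ = ⟪u, At v⟫)
    (βx βy : ℝ) (hβx : 0 < βx) (hβy : 0 < βy)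
    (xs : X) (ys : Y) (hsaddle : IsSaddle f A b xs ys)
    (hdom_ne : (fdom f).Nonempty) (hdom_closed : IsClosed (fdom f))
    (η : ℝ) (hη : 0 < η)
    (hQEB : ∀ z' : X × Y,
      ((η / 2 * (distZ z' (saddleSet f A b)) ^ 2 : ℝ) : EReal)
        ≤ smoothedGap f A b βx βy z'.1 z'.2 z'.1 z'.2)
    (x : X) (y : Y) (fx : ℝ) (hfx : f x = (fx : EReal))
    (a : X) (ha : IsProj (fdom f) (-(At y)) a)
    (fa : ℝ) (hfa : fenchel f a = (fa : EReal)) :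
    f x - f xs
      ≤ (((1 + ‖x‖
            + Real.sqrt (2 / η)
              * Real.sqrt ((1 + ‖x‖ + ‖y‖) * Real.sqrt (PDG fx fa A At b a x y)
                  + PDG fx fa A At b a x y / (2 * min βx βy)))
          * Real.sqrt (PDG fx fa A At b a x y) : ℝ) : EReal) := by
  have hbot := hf_proper.1
  obtain ⟨D, hDdef⟩ : ∃ D, D = PDG fx fa A At b a x y := ⟨_, rfl⟩
  obtain ⟨m, hmdef⟩ : ∃ m, m = min βx βy := ⟨_, rfl⟩
  obtain ⟨s, hsdef⟩ : ∃ s, s = Real.sqrt D := ⟨_, rfl⟩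
  obtain ⟨d, hddef⟩ : ∃ d, d = distZ (x, y) (saddleSet f A b) := ⟨_, rfl⟩
  rw [← hDdef, ← hmdef, ← hsdef]
  have hDeq : D = |fx + fa + ⟪b, y⟫| ^ 2 + ‖a + At y‖ ^ 2 + ‖A x - b‖ ^ 2 := hDdef
  have hs0 : 0 ≤ s := by rw [hsdef]; positivity
  have habs : |fx + fa + ⟪b, y⟫| ≤ s := hsdef ▸
    Real.abs_le_sqrt (by rw [hDeq, ← sq_abs]; nlinarith [sq_nonneg ‖a + At y‖, sq_nonneg ‖A x - b‖])
  have h2 : ‖a + At y‖ ≤ s := by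
    rw [hsdef, ← abs_norm]
    exact Real.abs_le_sqrt (by rw [hDeq]; nlinarith [sq_nonneg |fx + fa + ⟪b, y⟫|, sq_nonneg ‖A x - b‖])
  have h3 : ‖A x - b‖ ≤ s := by
    rw [hsdef, ← abs_norm]
    exact Real.abs_le_sqrt (by rw [hDeq]; nlinarith [sq_nonneg |fx + fa + ⟪b, y⟫|, sq_nonneg ‖a + At y‖])
  have hsum : fx + fa + ⟪b, y⟫ ≤ s := le_trans (le_abs_self _) habs
  -- conjugate inequality
  have hconj : ∀ (u : X) (r : ℝ), f u = (r : EReal) → ⟪a, u⟫ - fa ≤ r := by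
    intro u r hu
    have h : ((⟪a, u⟫ : ℝ) : EReal) - f u ≤ fenchel f a :=
      le_iSup (fun v : X => ((⟪a, v⟫ : ℝ) : EReal) - f v) u
    rw [hfa, hu, ← EReal.coe_sub] at h
    have := EReal.coe_le_coe_iff.mp h
    linarith
  have hm : 0 < m := hmdef ▸ lt_min hβx hβy
  obtain ⟨M, hMdef⟩ : ∃ M, M = (1 + ‖x‖ + ‖y‖) * s + D / (2 * m) := ⟨_, rfl⟩
  rw [← hMdef]
  -- bound on the smoothed gap at (x, y)
  have hG : smoothedGap f A b βx βy x y x y ≤ ((M : ℝ) : EReal) := by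
    apply iSup_le
    intro w
    rcases em (f w.1 = ⊤) with hw | hw
    · simp only [Lag, hw, hfx]
      simp
    · obtain ⟨r, hr⟩ : ∃ r : ℝ, f w.1 = (r : EReal) :=
        ⟨(f w.1).toReal, (EReal.coe_toReal hw (hbot w.1)).symm⟩
      simp only [Lag, hfx, hr]
      have hre : fx + ⟪A x - b, w.2⟫ - (r + ⟪A w.1 - b, y⟫)
          - (βx / 2 * ‖w.1 - x‖ ^ 2 + βy / 2 * ‖w.2 - y‖ ^ 2) ≤ M := by
        have hrl : ⟪a, w.1⟫ - fa ≤ r := hconj w.1 r hr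
        have hsplit : ⟪A w.1 - b, y⟫ = ⟪a + At y, w.1⟫ - ⟪a, w.1⟫ - ⟪b, y⟫ := by
          rw [inner_sub_left, hAt, inner_add_left, real_inner_comm (At y) w.1]
          ring
        have hy1 : ⟪A x - b, w.2⟫
            ≤ ⟪A x - b, y⟫ + ‖A x - b‖ * ‖w.2 - y‖ := by
          have : ⟪A x - b, w.2⟫ = ⟪A x - b, y⟫ + ⟪A x - b, w.2 - y⟫ := by
            rw [← inner_add_right]; congr 1; abel
          rw [this]
          have := real_inner_le_norm (A x - b) (w.2 - y)
          linarith
        have hy2 : ⟪A x - b, y⟫ ≤ s * ‖y‖ := by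
          have h := real_inner_le_norm (A x - b) y
          nlinarith [norm_nonneg y]
        have hx1 : -⟪a + At y, w.1⟫
            ≤ -⟪a + At y, x⟫ + ‖a + At y‖ * ‖w.1 - x‖ := by
          have e : ⟪a + At y, x⟫ - ⟪a + At y, w.1⟫ = ⟪a + At y, x - w.1⟫ := by
            rw [inner_sub_right]
          have h := real_inner_le_norm (a + At y) (x - w.1)
          rw [norm_sub_rev x w.1] at h
          linarith [e ▸ h]
        have hx2 : -⟪a + At y, x⟫ ≤ s * ‖x‖ := by
          have h := abs_real_inner_le_norm (a + At y) x
          have h' := neg_abs_le ⟪a + At y, x⟫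
          nlinarith [norm_nonneg x]
        have hq1 : ‖A x - b‖ * ‖w.2 - y‖ - βy / 2 * ‖w.2 - y‖ ^ 2
            ≤ ‖A x - b‖ ^ 2 / (2 * βy) := amgm_aux hβy
        have hq2 : ‖a + At y‖ * ‖w.1 - x‖ - βx / 2 * ‖w.1 - x‖ ^ 2
            ≤ ‖a + At y‖ ^ 2 / (2 * βx) := amgm_aux hβx
        have hqs : ‖A x - b‖ ^ 2 / (2 * βy) + ‖a + At y‖ ^ 2 / (2 * βx) ≤ D / (2 * m) := by
          have hyb : ‖A x - b‖ ^ 2 / (2 * βy) ≤ ‖A x - b‖ ^ 2 / (2 * m) := by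
            rw [hmdef]; gcongr
            exact min_le_right _ _
          have hxb : ‖a + At y‖ ^ 2 / (2 * m) + ‖A x - b‖ ^ 2 / (2 * m) ≤ D / (2 * m) := by
            rw [← add_div]
            gcongr
            rw [hDeq]
            linarith [sq_nonneg |fx + fa + ⟪b, y⟫|]
          have hxb2 : ‖a + At y‖ ^ 2 / (2 * βx) ≤ ‖a + At y‖ ^ 2 / (2 * m) := by
            rw [hmdef]; gcongr
            exact min_le_left _ _
          linarith
        rw [hMdef]
        linarith [hsplit, hrl, hy1, hy2, hx1, hx2, hq1, hq2, hqs, hsum]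
      have e1 : (fx : EReal) + ((⟪A x - b, w.2⟫ : ℝ) : EReal)
          = ((fx + ⟪A x - b, w.2⟫ : ℝ) : EReal) := by norm_cast
      have e2 : (r : EReal) + ((⟪A w.1 - b, y⟫ : ℝ) : EReal)
          = ((r + ⟪A w.1 - b, y⟫ : ℝ) : EReal) := by norm_cast
      rw [e1, e2, ← EReal.coe_sub, ← EReal.coe_sub]
      exact EReal.coe_le_coe_iff.mpr hre
  -- quadratic error bound gives a distance bound
  have hdM : η / 2 * d ^ 2 ≤ M := by
    have h := le_trans (hQEB (x, y)) hG
    rw [hddef]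
    exact EReal.coe_le_coe_iff.mp h
  have hM0 : 0 ≤ M := le_trans (by positivity) hdM
  have hdle : d ≤ Real.sqrt (2 / η) * Real.sqrt M := by
    have hd2 : d ^ 2 ≤ 2 / η * M := by
      rw [div_mul_eq_mul_div, le_div_iff₀ hη]
      nlinarith
    calc d ≤ |d| := le_abs_self d
      _ ≤ Real.sqrt (2 / η * M) := Real.abs_le_sqrt hd2
      _ = Real.sqrt (2 / η) * Real.sqrt M := Real.sqrt_mul (by positivity) M
  -- saddle value
  obtain ⟨fxs, hfxs⟩ := (saddle_basic hf_proper hsaddle).2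
  haveI : Nonempty ↥(saddleSet f A b) := ⟨⟨(xs, ys), hsaddle⟩⟩
  have key : ∀ ε > (0 : ℝ), fx - fxs ≤ (1 + ‖x‖ + (d + ε)) * s := by
    intro ε hε
    have hlt : distZ (x, y) (saddleSet f A b) < d + ε := by rw [← hddef]; linarith
    rw [distZ] at hlt
    obtain ⟨w, hw⟩ := exists_lt_of_ciInf_lt hlt
    have hxw : ‖x - (w : X × Y).1‖ ≤ d + ε := by
      have hle : ‖x - (w : X × Y).1‖
          ≤ Real.sqrt (‖(x, y).1 - (w : X × Y).1‖ ^ 2 + ‖(x, y).2 - (w : X × Y).2‖ ^ 2) := by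
        rw [Real.le_sqrt (norm_nonneg _)]
        · have e1 : ((x, y).1 : X) = x := rfl
          have e2 : ((x, y).2 : Y) = y := rfl
          rw [e1, e2]
          nlinarith [sq_nonneg ‖y - (w : X × Y).2‖]
        · positivity
      linarith
    have hws : IsSaddle f A b (w : X × Y).1 (w : X × Y).2 := w.2
    have hweq : f (w : X × Y).1 = (fxs : EReal) := by
      rw [saddle_val_eq hf_proper hws hsaddle]; exact hfxs
    have hAw : A (w : X × Y).1 = b := (saddle_basic hf_proper hws).1
    have hc : ⟪a, (w : X × Y).1⟫ - fa ≤ fxs := hconj _ fxs hweq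
    have hsp : ⟪a, (w : X × Y).1⟫ = ⟪a + At y, (w : X × Y).1⟫ - ⟪b, y⟫ := by
      have h1 : ⟪A (w : X × Y).1, y⟫ = ⟪(w : X × Y).1, At y⟫ := hAt _ _
      rw [hAw] at h1
      have h2' : ⟪b, y⟫ = ⟪At y, (w : X × Y).1⟫ := h1.trans (real_inner_comm _ _)
      rw [inner_add_left, ← h2']
      ring
    have hwn : ‖(w : X × Y).1‖ ≤ ‖x‖ + (d + ε) := by
      have h := norm_sub_norm_le (w : X × Y).1 x
      rw [norm_sub_rev] at h
      linarith
    have hip : -⟪a + At y, (w : X × Y).1⟫ ≤ s * ‖(w : X × Y).1‖ := by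
      have h := abs_real_inner_le_norm (a + At y) (w : X × Y).1
      have h' := neg_abs_le ⟪a + At y, (w : X × Y).1⟫
      nlinarith [norm_nonneg (w : X × Y).1]
    -- fx - fxs ≤ fx + fa + ⟪b,y⟫ - ⟪a + At y, w.1⟫ ≤ s + s * ‖w.1‖
    have hmul : s * ‖(w : X × Y).1‖ ≤ s * (‖x‖ + (d + ε)) :=
      mul_le_mul_of_nonneg_left hwn hs0
    nlinarith [hsp, hc, hip, hmul, hsum]
  have hfinal : fx - fxs ≤ (1 + ‖x‖ + Real.sqrt (2 / η) * Real.sqrt M) * s := by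
    apply le_of_forall_pos_le_add
    intro ε' hε'
    have hεp : (0 : ℝ) < ε' / (s + 1) := by positivity
    have hk := key _ hεp
    have h1' : (1 + ‖x‖ + d) * s ≤ (1 + ‖x‖ + Real.sqrt (2 / η) * Real.sqrt M) * s :=
      mul_le_mul_of_nonneg_right (by linarith) hs0
    have h2' : ε' / (s + 1) * s ≤ ε' := by
      rw [div_mul_eq_mul_div, div_le_iff₀ (by linarith)]
      nlinarith
    nlinarith
  rw [hfx, hfxs, ← EReal.coe_sub]
  exact EReal.coe_le_coe_iff.mpr hfinal
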